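/- Let φ : X → ℝ^d with ‖φ(x)‖₂ ≤ 1 for all x, let λ' > 0, and let X_n be any sequence of points. Then the 'information gain' Σ_{k=0}^{n−1} log(1 + σ²_k(x_{k+1}) / λ') = log det(I_n + (1/λ') K_{X_n}) ≤ d · log(1 + λ̂_n / λ'), where K_{X_n} is the kernel matrix of the linear kernel k(x,x') = φ(x)ᵀφ(x'), σ²_k denotes the posterior variance after the first k points, and λ̂_n is the largest eigenvalue of Φ_nᵀΦ_n (which is at most n). -/

import Mathlib

open Matrix
open Finset

/-- Regularized posterior (conditional) kernel of the linear kernel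
`k(a,b) = ⟪φ a, φ b⟫` after conditioning on the points `xs` with regularization `lam`:
`k_X(a,b) = k(a,b) − k_X(a)ᵀ (K_X + λ I)⁻¹ k_X(b)`.
For `n = 0` this is the prior kernel; the diagonal `postK φ lam xs x x` is `σ²_X(x)`. -/
noncomputable def postK {α E : Type*} [NormedAddCommGroup E] [InnerProductSpace ℝ E]
    {n : ℕ} (φ : α → E) (lam : ℝ) (xs : Fin n → α) (a b : α) : ℝ :=
  (inner ℝ (φ a) (φ b) : ℝ) -
    (fun i => (inner ℝ (φ (xs i)) (φ a) : ℝ)) ⬝ᵥ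
      ((Matrix.of (fun i j => (inner ℝ (φ (xs i)) (φ (xs j)) : ℝ))
          + lam • (1 : Matrix (Fin n) (Fin n) ℝ))⁻¹).mulVec
        (fun i => (inner ℝ (φ (xs i)) (φ b) : ℝ))

section Aux
variable {α : Type*} {d : ℕ}

/-- Kernel matrix of the linear kernel. -/
noncomputable def kerMat (φ : α → EuclideanSpace ℝ (Fin d)) {n : ℕ} (xs : Fin n → α) :
    Matrix (Fin n) (Fin n) ℝ :=
  Matrix.of fun i j => (inner ℝ (φ (xs i)) (φ (xs j)) : ℝ)

lemma kerMat_eq_mul (φ : α → EuclideanSpace ℝ (Fin d)) {n : ℕ} (xs : Fin n → α) :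
    kerMat φ xs = (Matrix.of fun i j => φ (xs i) j) * (Matrix.of fun i j => φ (xs i) j)ᵀ := by
  ext i j
  simp [kerMat, Matrix.mul_apply, PiLp.inner_apply, RCLike.inner_apply]
  exact Finset.sum_congr rfl fun _ _ => mul_comm _ _

lemma kerMat_posSemidef (φ : α → EuclideanSpace ℝ (Fin d)) {n : ℕ} (xs : Fin n → α) :
    (kerMat φ xs).PosSemidef := by
  rw [kerMat_eq_mul]
  have h := Matrix.posSemidef_self_mul_conjTranspose (Matrix.of fun i j => φ (xs i) j)
  rwa [conjTranspose_eq_transpose_of_trivial] at h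

lemma regMat_posDef (φ : α → EuclideanSpace ℝ (Fin d)) {n : ℕ} (xs : Fin n → α)
    {lam : ℝ} (hlam : 0 < lam) :
    (kerMat φ xs + lam • (1 : Matrix (Fin n) (Fin n) ℝ)).PosDef := by
  refine Matrix.PosDef.posSemidef_add (kerMat_posSemidef φ xs) ?_
  rw [Matrix.smul_one_eq_diagonal]
  exact Matrix.PosDef.diagonal (fun i => hlam)

end Aux

section Aux2
variable {α : Type*} {d : ℕ}

lemma det_step (φ : α → EuclideanSpace ℝ (Fin d)) {lam : ℝ} (hlam : 0 < lam)
    (xs : ℕ → α) (k : ℕ) :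
    (kerMat φ (fun i : Fin (k+1) => xs i) + lam • 1).det
      = (kerMat φ (fun i : Fin k => xs i) + lam • 1).det
        * (lam + postK φ lam (fun i : Fin k => xs i) (xs k) (xs k)) := by
  set v : Fin k → ℝ := fun i => (inner ℝ (φ (xs i)) (φ (xs k)) : ℝ) with hv
  set A : Matrix (Fin k) (Fin k) ℝ := kerMat φ (fun i : Fin k => xs i) + lam • 1 with hA
  set B : Matrix (Fin k) (Fin 1) ℝ := Matrix.of fun i _ => v i with hB
  set C : Matrix (Fin 1) (Fin k) ℝ := Matrix.of fun _ j => v j with hC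
  set D : Matrix (Fin 1) (Fin 1) ℝ :=
    Matrix.of fun _ _ => (inner ℝ (φ (xs k)) (φ (xs k)) : ℝ) + lam with hD
  have hApd : A.PosDef := regMat_posDef φ _ hlam
  haveI : Invertible A := hApd.isUnit.invertible
  have hM : kerMat φ (fun i : Fin (k+1) => xs i) + lam • 1
      = (fromBlocks A B C D).submatrix finSumFinEquiv.symm finSumFinEquiv.symm := by
    ext i j
    obtain ⟨i', rfl⟩ := finSumFinEquiv.surjective i
    obtain ⟨j', rfl⟩ := finSumFinEquiv.surjective j
    rw [Matrix.submatrix_apply, Equiv.symm_apply_apply, Equiv.symm_apply_apply]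
    rcases i' with i' | i' <;> rcases j' with j' | j'
    · show _ = A i' j'
      rw [hA]
      simp [kerMat, Matrix.one_apply, Fin.ext_iff]
    · show _ = B i' j'
      have hne : ¬ (Fin.castAdd 1 i' = Fin.natAdd k j') := by
        simp [Fin.ext_iff]; omega
      simp [kerMat, Matrix.one_apply, hne, hB, hv, Fin.val_eq_zero j']
    · show _ = C i' j'
      have hne : ¬ (Fin.natAdd k i' = Fin.castAdd 1 j') := by
        simp [Fin.ext_iff]; omega
      simp [kerMat, Matrix.one_apply, hne, hC, hv, Fin.val_eq_zero i']
      exact Finset.sum_congr rfl fun _ _ => mul_comm _ _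
    · show _ = D i' j'
      simp [kerMat, Matrix.one_apply, hD, Fin.ext_iff, Fin.val_eq_zero i', Fin.val_eq_zero j']
  rw [hM, det_submatrix_equiv_self, det_fromBlocks₁₁, det_fin_one]
  have hCB : (C * ⅟A * B) 0 0 = v ⬝ᵥ A⁻¹.mulVec v := by
    rw [invOf_eq_nonsing_inv]
    simp only [Matrix.mul_apply, Matrix.of_apply, dotProduct, mulVec, Finset.sum_mul,
      Finset.mul_sum, hB, hC]
    rw [Finset.sum_comm]
    exact Finset.sum_congr rfl fun j _ => Finset.sum_congr rfl fun i _ => by ring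
  have : postK φ lam (fun i : Fin k => xs i) (xs k) (xs k)
      = (inner ℝ (φ (xs k)) (φ (xs k)) : ℝ) - v ⬝ᵥ A⁻¹.mulVec v := by
    simp only [postK, hv, hA, kerMat]
  rw [Matrix.sub_apply, hCB, this]
  simp only [hD, Matrix.of_apply]
  ring
end Aux2

section Aux3
variable {α : Type*} {d : ℕ}

lemma sum_log_eq (φ : α → EuclideanSpace ℝ (Fin d)) {lam : ℝ} (hlam : 0 < lam)
    (xs : ℕ → α) (n : ℕ) :
    ∑ k ∈ Finset.range n,
        Real.log (1 + postK φ lam (fun i : Fin k => xs i) (xs k) (xs k) / lam)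
      = Real.log ((kerMat φ (fun i : Fin n => xs i) + lam • 1).det)
        - n * Real.log lam := by
  induction n with
  | zero => simp [Matrix.det_isEmpty]
  | succ n ih =>
    have ha : 0 < (kerMat φ (fun i : Fin n => xs i) + lam • 1).det :=
      (regMat_posDef φ _ hlam).det_pos
    have ha' : 0 < (kerMat φ (fun i : Fin (n+1) => xs i) + lam • 1).det :=
      (regMat_posDef φ _ hlam).det_pos
    have hstep := det_step φ hlam xs n
    have hs : 0 < lam + postK φ lam (fun i : Fin n => xs i) (xs n) (xs n) := by
      rw [hstep] at ha'
      by_contra h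
      push_neg at h
      nlinarith
    rw [Finset.sum_range_succ, ih, hstep, Real.log_mul ha.ne' hs.ne']
    have h1 : (1 : ℝ) + postK φ lam (fun i : Fin n => xs i) (xs n) (xs n) / lam
        = (lam + postK φ lam (fun i : Fin n => xs i) (xs n) (xs n)) / lam := by
      field_simp
    rw [h1, Real.log_div hs.ne' hlam.ne']
    push_cast
    ring

end Aux3

section Aux4
variable {m : Type*} [Fintype m] [DecidableEq m]

lemma trace_eq_sum_eigs {A : Matrix m m ℝ} (hA : A.IsHermitian) :
    A.trace = ∑ i, hA.eigenvalues i := by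
  nth_rewrite 1 [hA.spectral_theorem]
  rw [Unitary.conjStarAlgAut_apply, Matrix.trace_mul_cycle, Unitary.coe_star_mul_self, one_mul, Matrix.trace_diagonal]
  rfl

lemma det_one_add_smul_eq_prod {A : Matrix m m ℝ} (hA : A.IsHermitian) (c : ℝ) :
    ((1 : Matrix m m ℝ) + c • A).det = ∏ i, (1 + c * hA.eigenvalues i) := by
  set U : Matrix m m ℝ := (hA.eigenvectorUnitary : Matrix m m ℝ) with hU
  have hU1 : U * star U = 1 := Unitary.coe_mul_star_self _
  have hU2 : star U * U = 1 := Unitary.coe_star_mul_self _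
  have hdg : (Matrix.diagonal fun i => 1 + c * hA.eigenvalues i)
      = (1 : Matrix m m ℝ) + c • Matrix.diagonal (RCLike.ofReal ∘ hA.eigenvalues) := by
    rw [← Matrix.diagonal_one, ← Matrix.diagonal_smul, ← Matrix.diagonal_add]
    congr 1
  have key : (1 : Matrix m m ℝ) + c • A
      = U * (Matrix.diagonal fun i => 1 + c * hA.eigenvalues i) * star U := by
    rw [hdg, Matrix.mul_add, Matrix.add_mul, Matrix.mul_one, hU1, Matrix.mul_smul,
      Matrix.smul_mul, hU, ← Unitary.conjStarAlgAut_apply (S := ℝ), ← hA.spectral_theorem]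
  rw [key, det_mul, det_mul, mul_right_comm, ← det_mul, hU1, det_one, one_mul, det_diagonal]

end Aux4


/-- Information gain bound: with `‖φ(x)‖ ≤ 1` and regularizer `λ' > 0`,
`∑_{k<n} log(1 + σ²_k(x_{k+1})/λ') = log det(I_n + (1/λ') K_{X_n}) ≤ d·log(1 + λ̂_n/λ')`,
where `λ̂_n` is the largest eigenvalue of `ΦₙᵀΦₙ`, which is at most `n`. -/
theorem information_gain_bound {α : Type*} {d : ℕ}
    (φ : α → EuclideanSpace ℝ (Fin d)) (hφ : ∀ x, ‖φ x‖ ≤ 1)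
    (lam : ℝ) (hlam : 0 < lam) (xs : ℕ → α) (n : ℕ)
    (Φn : Matrix (Fin n) (Fin d) ℝ) (hΦn : ∀ i j, Φn i j = φ (xs i) j)
    (hH : (Φnᵀ * Φn).IsHermitian) :
    (∑ k ∈ Finset.range n,
        Real.log (1 + postK φ lam (fun i : Fin k => xs i) (xs k) (xs k) / lam))
      = Real.log ((1 + lam⁻¹ • (Φn * Φnᵀ)).det)
    ∧ Real.log ((1 + lam⁻¹ • (Φn * Φnᵀ)).det)
        ≤ d * Real.log (1 + (⨆ i, hH.eigenvalues i) / lam)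
    ∧ (⨆ i, hH.eigenvalues i) ≤ n := by
  have hK : Φn * Φnᵀ = kerMat φ (fun i : Fin n => xs i) := by
    ext i j
    simp [Matrix.mul_apply, kerMat, PiLp.inner_apply, RCLike.inner_apply, hΦn]
    exact Finset.sum_congr rfl fun _ _ => mul_comm _ _
  have hdet1 : (1 + lam⁻¹ • (Φn * Φnᵀ))
      = lam⁻¹ • (kerMat φ (fun i : Fin n => xs i) + lam • 1) := by
    rw [hK, smul_add, smul_smul, inv_mul_cancel₀ hlam.ne', one_smul, add_comm]
  have hdetpos : 0 < (kerMat φ (fun i : Fin n => xs i) + lam • 1).det :=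
    (regMat_posDef φ _ hlam).det_pos
  set μ := hH.eigenvalues with hμ
  have hPSD : (Φnᵀ * Φn).PosSemidef := by
    have := Matrix.posSemidef_conjTranspose_mul_self Φn
    rwa [conjTranspose_eq_transpose_of_trivial] at this
  have hμ0 : ∀ i, 0 ≤ μ i := fun i => hPSD.eigenvalues_nonneg i
  have htr : (Φnᵀ * Φn).trace ≤ (n : ℝ) := by
    have h1 : (Φnᵀ * Φn).trace = ∑ i : Fin n, ∑ j : Fin d, Φn i j * Φn i j := by
      rw [Matrix.trace]
      simp only [Matrix.diag, Matrix.mul_apply, Matrix.transpose_apply]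
      rw [Finset.sum_comm]
    rw [h1]
    calc ∑ i : Fin n, ∑ j : Fin d, Φn i j * Φn i j ≤ ∑ _i : Fin n, (1 : ℝ) := by
          apply Finset.sum_le_sum
          intro i _
          have he : ∑ j, Φn i j * Φn i j = (inner ℝ (φ (xs i)) (φ (xs i)) : ℝ) := by
            simp [PiLp.inner_apply, RCLike.inner_apply, hΦn]
            rw [EuclideanSpace.norm_eq, Real.sq_sqrt (by positivity)]
            exact Finset.sum_congr rfl fun _ _ => by rw [Real.norm_eq_abs, sq_abs, sq]
          rw [he, real_inner_self_eq_norm_sq]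
          have h := hφ (xs i)
          nlinarith [norm_nonneg (φ (xs i))]
      _ = (n : ℝ) := by simp
  refine ⟨?_, ?_, ?_⟩
  · rw [sum_log_eq φ hlam xs n, hdet1, det_smul,
      Real.log_mul (by positivity) hdetpos.ne', Real.log_pow, Real.log_inv]
    simp only [Fintype.card_fin]
    ring
  · have hWA : (1 + lam⁻¹ • (Φn * Φnᵀ)).det = (1 + lam⁻¹ • (Φnᵀ * Φn)).det := by
      rw [← Matrix.smul_mul, det_one_add_mul_comm, Matrix.mul_smul]
    rw [hWA, det_one_add_smul_eq_prod hH lam⁻¹]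
    have hsup : ∀ i, μ i ≤ ⨆ j, μ j := fun i =>
      le_ciSup (Set.Finite.bddAbove (Set.finite_range μ)) i
    have hterm : ∀ i, (0:ℝ) < 1 + lam⁻¹ * μ i := fun i =>
      add_pos_of_pos_of_nonneg one_pos (mul_nonneg (by positivity) (hμ0 i))
    rw [Real.log_prod (fun i _ => (hterm i).ne')]
    calc ∑ i, Real.log (1 + lam⁻¹ * μ i)
        ≤ ∑ _i : Fin d, Real.log (1 + (⨆ j, μ j) / lam) := by
          apply Finset.sum_le_sum
          intro i _
          have : 1 + lam⁻¹ * μ i ≤ 1 + (⨆ j, μ j) / lam := by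
            rw [div_eq_inv_mul]
            exact add_le_add_right (mul_le_mul_of_nonneg_left (hsup i) (by positivity)) 1
          exact Real.log_le_log (hterm i) this
      _ = d * Real.log (1 + (⨆ j, μ j) / lam) := by
          rw [Finset.sum_const, Finset.card_univ, Fintype.card_fin, nsmul_eq_mul]
  · by_cases hd : d = 0
    · subst hd
      have : (⨆ i : Fin 0, μ i) = 0 := Real.iSup_of_isEmpty _
      rw [this]
      positivity
    · haveI : Nonempty (Fin d) := ⟨⟨0, Nat.pos_of_ne_zero hd⟩⟩
      apply ciSup_le
      intro i
      calc μ i ≤ ∑ j, μ j := Finset.single_le_sum (fun j _ => hμ0 j) (Finset.mem_univ i)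
        _ = (Φnᵀ * Φn).trace := (trace_eq_sum_eigs hH).symm
        _ ≤ n := htr
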